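/- arXiv:2509.00957 — 2 statements merged into one kernel-verified Lean document; each statement's English description precedes it below -/
import Mathlib

section
/- Let p, m₁, d, q be natural numbers, let g : ℝ^p × ℝ^d → (ℝ^{q×m₁} matrices) be differentiable in its first argument at θ̃, and set θ = (θ̃, w) ∈ ℝ^{p+m₁} and f_θ(z) = g(θ̃, z)·w. Then the function z ↦ f_θ(z) lies in the span of the partial-derivative functions: there exists a coefficient vector v ∈ ℝ^{p+m₁} (namely v = (0, w)) such that for all z ∈ ℝ^d, f_θ(z) = Σ_{i=1}^{p+m₁} v_i · (∂f_θ/∂θ_i)(z). -/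
/-- Proposition 2.1: if `f_θ z = g θt z · w` with `θ = (θt, w)` and `g`
differentiable in its first argument at `θt`, then `z ↦ f_θ z` lies in the span of the
partial-derivative functions `z ↦ ∂f_θ/∂θ_i z`: there is a coefficient vector
`v = (v₁, v₂) ∈ ℝ^p × ℝ^{m₁}` with `f_θ z = Σ_i v_i · ∂f_θ/∂θ_i z` for all `z`. -/
theorem stmt1 (p m₁ d q : ℕ)
    (g : (Fin p → ℝ) → (Fin d → ℝ) → Fin q → Fin m₁ → ℝ)
    (θt : Fin p → ℝ) (w : Fin m₁ → ℝ)
    (hg : ∀ z : Fin d → ℝ, DifferentiableAt ℝ (fun θ => g θ z) θt)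
    (f : ((Fin p → ℝ) × (Fin m₁ → ℝ)) → (Fin d → ℝ) → Fin q → ℝ)
    (hf : ∀ θw z i, f θw z i = ∑ j, g θw.1 z i j * θw.2 j) :
    ∃ v : (Fin p → ℝ) × (Fin m₁ → ℝ), ∀ z : Fin d → ℝ,
      f (θt, w) z =
        (∑ i : Fin p,
          v.1 i • fderiv ℝ (fun θw => f θw z) (θt, w) (Pi.single i 1, 0)) +
        ∑ j : Fin m₁,
          v.2 j • fderiv ℝ (fun θw => f θw z) (θt, w) (0, Pi.single j 1) := by
  refine ⟨(0, w), fun z => ?_⟩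
  set Dg := fderiv ℝ (fun θ => g θ z) θt with hDg
  have hDgAt : HasFDerivAt (fun θ => g θ z) Dg θt := (hg z).hasFDerivAt
  -- derivative of each component (i, j) factor
  have hC : ∀ i j, HasFDerivAt (fun θw : (Fin p → ℝ) × (Fin m₁ → ℝ) => g θw.1 z i j)
      (((ContinuousLinearMap.proj j).comp
        ((ContinuousLinearMap.proj i).comp Dg)).comp (ContinuousLinearMap.fst ℝ _ _)) (θt, w) := by
    intro i j
    have h1 : HasFDerivAt (fun θ => g θ z i j)
        ((ContinuousLinearMap.proj j).comp ((ContinuousLinearMap.proj i).comp Dg)) θt := by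
      have := ((ContinuousLinearMap.proj (R := ℝ) (φ := fun _ : Fin m₁ => ℝ) j).hasFDerivAt.comp θt
        (((ContinuousLinearMap.proj (R := ℝ) (φ := fun _ : Fin q => Fin m₁ → ℝ) i).hasFDerivAt.comp θt hDgAt)))
      exact this
    exact h1.comp (θt, w) (f := Prod.fst) (hasFDerivAt_fst (p := (θt, w)))
  have hD : ∀ j : Fin m₁, HasFDerivAt (fun θw : (Fin p → ℝ) × (Fin m₁ → ℝ) => θw.2 j)
      ((ContinuousLinearMap.proj j).comp (ContinuousLinearMap.snd ℝ _ _)) (θt, w) :=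
    fun j => by
      exact
        ((ContinuousLinearMap.proj (R := ℝ) (φ := fun _ : Fin m₁ => ℝ) j).comp
          (ContinuousLinearMap.snd ℝ (Fin p → ℝ) (Fin m₁ → ℝ))).hasFDerivAt
  -- derivative of f in θw
  have hFi : ∀ i : Fin q, HasFDerivAt (fun θw : (Fin p → ℝ) × (Fin m₁ → ℝ) => f θw z i)
      (∑ j : Fin m₁,
        (g θt z i j • ((ContinuousLinearMap.proj j).comp (ContinuousLinearMap.snd ℝ _ _))
          + w j • (((ContinuousLinearMap.proj j).comp
            ((ContinuousLinearMap.proj i).comp Dg)).comp (ContinuousLinearMap.fst ℝ _ _)))) (θt, w) := by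
    intro i
    have : HasFDerivAt (fun θw : (Fin p → ℝ) × (Fin m₁ → ℝ) => ∑ j, g θw.1 z i j * θw.2 j)
        (∑ j : Fin m₁,
          (g θt z i j • ((ContinuousLinearMap.proj (R := ℝ) (φ := fun _ : Fin m₁ => ℝ) j).comp (ContinuousLinearMap.snd ℝ _ _))
            + w j • (((ContinuousLinearMap.proj j).comp
              ((ContinuousLinearMap.proj i).comp Dg)).comp (ContinuousLinearMap.fst ℝ _ _)))) (θt, w) := by
      apply HasFDerivAt.fun_sum
      intro j _
      simpa using (hC i j).fun_mul (hD j)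
    exact this.congr_of_eventuallyEq (Filter.Eventually.of_forall fun θw => by simpa using hf θw z i)
  have hF : HasFDerivAt (fun θw : (Fin p → ℝ) × (Fin m₁ → ℝ) => f θw z)
      (ContinuousLinearMap.pi (fun i =>
        ∑ j : Fin m₁,
          (g θt z i j • ((ContinuousLinearMap.proj j).comp (ContinuousLinearMap.snd ℝ _ _))
            + w j • (((ContinuousLinearMap.proj j).comp
              ((ContinuousLinearMap.proj i).comp Dg)).comp (ContinuousLinearMap.fst ℝ _ _))))) (θt, w) :=
    hasFDerivAt_pi.2 hFi
  rw [hF.fderiv]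
  funext i
  simp only [Prod.fst_zero, Pi.zero_apply, zero_smul, Finset.sum_const_zero,
    Pi.add_apply, Finset.sum_apply, Pi.smul_apply, ContinuousLinearMap.pi_apply, ContinuousLinearMap.coe_sum', Finset.sum_apply,
    ContinuousLinearMap.add_apply, ContinuousLinearMap.smul_apply,
    ContinuousLinearMap.comp_apply, ContinuousLinearMap.proj_apply,
    ContinuousLinearMap.coe_fst', ContinuousLinearMap.coe_snd', map_zero, zero_add]
  rw [hf]
  simp [Pi.single_apply, Finset.mul_sum, mul_comm]
end

section
/- Let H be a real normed vector space, let S : H → H be a continuous linear map, let h > 0 and C₁ > 0, and assume ‖w + h·S(w)‖ ≤ (1 + h·C₁)·‖w‖ for all w ∈ H. Let u, v, r : ℕ → H be sequences with u(0) = v(0), u(k+1) = u(k) + h·r(k), and v(k+1) = v(k) + h·S(v(k)). Suppose there is δ₁ ≥ 0 such that ‖r(k) − S(u(k))‖ ≤ δ₁ for all k. Then for every k ∈ ℕ and every sequence w : ℕ → H, ‖u(k) − w(k)‖ ≤ ‖v(k) − w(k)‖ + (δ₁/C₁)·(exp(C₁·h·k) − 1). -/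
/-- main error-estimation theorem. With the stability bound
`‖w + h•S w‖ ≤ (1 + h C₁) ‖w‖`, `u 0 = v 0`, `u (k+1) = u k + h • r k`,
`v (k+1) = v k + h • S (v k)` and projection errors `‖r k − S (u k)‖ ≤ δ₁`, one has,
for every `k` and every sequence `w`,
`‖u k − w k‖ ≤ ‖v k − w k‖ + (δ₁/C₁) (exp (C₁ h k) − 1)`. -/
theorem stmt5 (H : Type*) [NormedAddCommGroup H] [NormedSpace ℝ H]
    (S : H →L[ℝ] H) (h C₁ : ℝ) (hh : 0 < h) (hC₁ : 0 < C₁)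
    (hstab : ∀ w : H, ‖w + h • S w‖ ≤ (1 + h * C₁) * ‖w‖)
    (u v r : ℕ → H) (h0 : u 0 = v 0)
    (hu : ∀ k, u (k + 1) = u k + h • r k)
    (hv : ∀ k, v (k + 1) = v k + h • S (v k))
    (δ₁ : ℝ) (hδ₁ : 0 ≤ δ₁) (hproj : ∀ k, ‖r k - S (u k)‖ ≤ δ₁) :
    ∀ (k : ℕ) (w : ℕ → H),
      ‖u k - w k‖ ≤ ‖v k - w k‖ + (δ₁ / C₁) * (Real.exp (C₁ * h * k) - 1) := by
  have key : ∀ k : ℕ, ‖u k - v k‖ ≤ (δ₁ / C₁) * (Real.exp (C₁ * h * k) - 1) := by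
    intro k
    induction k with
    | zero => simp [h0]
    | succ k ih =>
      have hrec : u (k + 1) - v (k + 1)
          = ((u k - v k) + h • S (u k - v k)) + h • (r k - S (u k)) := by
        rw [hu, hv]
        simp only [map_sub, smul_sub]
        abel
      have hb : ‖u (k + 1) - v (k + 1)‖
          ≤ (1 + h * C₁) * ‖u k - v k‖ + h * δ₁ := by
        calc ‖u (k + 1) - v (k + 1)‖
            ≤ ‖(u k - v k) + h • S (u k - v k)‖ + ‖h • (r k - S (u k))‖ := by
              rw [hrec]; exact norm_add_le _ _
          _ ≤ (1 + h * C₁) * ‖u k - v k‖ + h * δ₁ := by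
              gcongr
              · exact hstab _
              · rw [norm_smul, Real.norm_of_nonneg hh.le]
                exact mul_le_mul_of_nonneg_left (hproj k) hh.le
      have hexp : 1 + h * C₁ ≤ Real.exp (C₁ * h) := by
        have := Real.add_one_le_exp (C₁ * h)
        linarith [this]
      have hnn : (0:ℝ) ≤ 1 + h * C₁ := by positivity
      calc ‖u (k + 1) - v (k + 1)‖
          ≤ (1 + h * C₁) * ‖u k - v k‖ + h * δ₁ := hb
        _ ≤ (1 + h * C₁) * ((δ₁ / C₁) * (Real.exp (C₁ * h * k) - 1)) + h * δ₁ := by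
            gcongr
        _ = (δ₁ / C₁) * ((1 + h * C₁) * Real.exp (C₁ * h * k) - 1) := by
            field_simp; ring
        _ ≤ (δ₁ / C₁) * (Real.exp (C₁ * h * (k + 1)) - 1) := by
            have e1 : Real.exp (C₁ * h * (k + 1)) = Real.exp (C₁ * h) * Real.exp (C₁ * h * k) := by
              rw [← Real.exp_add]; ring_nf
            have h2 : (1 + h * C₁) * Real.exp (C₁ * h * k) ≤ Real.exp (C₁ * h * (k + 1)) := by
              rw [e1]; exact mul_le_mul_of_nonneg_right hexp (Real.exp_pos _).le
            have h3 : (0:ℝ) ≤ δ₁ / C₁ := by positivity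
            nlinarith [h3, h2]
        _ = (δ₁ / C₁) * (Real.exp (C₁ * h * ((k:ℕ) + 1 : ℕ)) - 1) := by push_cast; ring_nf
  intro k w
  calc ‖u k - w k‖ ≤ ‖v k - w k‖ + ‖u k - v k‖ := by
        rw [add_comm]
        exact norm_sub_le_norm_sub_add_norm_sub (u k) (v k) (w k)
    _ ≤ ‖v k - w k‖ + (δ₁ / C₁) * (Real.exp (C₁ * h * k) - 1) := by
        gcongr
        · exact key k
end
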